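/- Let G1 and G2 be disjoint connected 3-leaf powers, S1 ⊆ V(G1) and S2 ⊆ V(G2) nonempty, and let H be the join composition obtained by adding all edges between S1 and S2. If S1 and S2 are cliques of G1 and G2 respectively, and for each i, whenever Si is not a critical clique of Gi then Gi is a clique, then H is a 3-leaf power. -/

import Mathlib

open SimpleGraph

/-- `K` is a clique which is a module of `G`. -/
def IsCliqueModule {V : Type*} (G : SimpleGraph V) (K : Set V) : Prop :=
  G.IsClique K ∧ ∀ x ∈ K, ∀ y ∈ K, ∀ z ∉ K, (G.Adj x z ↔ G.Adj y z)

/-- A critical clique of `G`: a maximal clique module. -/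
def IsCriticalClique {V : Type*} (G : SimpleGraph V) (K : Set V) : Prop :=
  K.Nonempty ∧ IsCliqueModule G K ∧ ∀ K', IsCliqueModule G K' → K ⊆ K' → K' = K

/-- The bull: a triangle `0,1,2` with pendant vertices `3` (on `1`) and `4` (on `2`). -/
def bull : SimpleGraph (Fin 5) :=
  SimpleGraph.fromRel (fun a b => (a, b) ∈ ([(0,1),(0,2),(1,2),(1,3),(2,4)] : List (Fin 5 × Fin 5)))

/-- The dart: a diamond `0,1,2,3` (missing edge `(0,1)`) plus a pendant vertex `4`
adjacent to the degree-3 vertex `2`. -/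
def dart : SimpleGraph (Fin 5) :=
  SimpleGraph.fromRel (fun a b => (a, b) ∈ ([(0,2),(0,3),(1,2),(1,3),(2,3),(2,4)] : List (Fin 5 × Fin 5)))

/-- The gem: a path `0-1-2-3` plus a dominating vertex `4`. -/
def gem : SimpleGraph (Fin 5) :=
  SimpleGraph.fromRel (fun a b => (a, b) ∈ ([(0,1),(1,2),(2,3),(0,4),(1,4),(2,4),(3,4)] : List (Fin 5 × Fin 5)))

/-- A graph is a 3-leaf power iff it is {bull, dart, gem, chordless `C≥4`}-free. -/
def Is3LeafPower {V : Type*} (H : SimpleGraph V) : Prop :=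
  IsEmpty (bull ↪g H) ∧ IsEmpty (dart ↪g H) ∧ IsEmpty (gem ↪g H) ∧
    ∀ n, 4 ≤ n → IsEmpty (SimpleGraph.cycleGraph n ↪g H)

/-- The join composition `(G1,S1) ⊗ (G2,S2)`: the disjoint union of `G1` and `G2`
together with all edges between `S1` and `S2`. -/
def joinComp {V1 V2 : Type*} (G1 : SimpleGraph V1) (G2 : SimpleGraph V2)
    (S1 : Set V1) (S2 : Set V2) : SimpleGraph (V1 ⊕ V2) :=
  SimpleGraph.fromRel (fun a b =>
    (∃ x y, a = .inl x ∧ b = .inl y ∧ G1.Adj x y) ∨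
    (∃ x y, a = .inr x ∧ b = .inr y ∧ G2.Adj x y) ∨
    (∃ x y, a = .inl x ∧ b = .inr y ∧ x ∈ S1 ∧ y ∈ S2))

/-! ### Auxiliary material -/

instance : DecidableRel bull.Adj :=
  fun a b => decidable_of_iff' _ (SimpleGraph.fromRel_adj _ a b)
instance : DecidableRel dart.Adj :=
  fun a b => decidable_of_iff' _ (SimpleGraph.fromRel_adj _ a b)
instance : DecidableRel gem.Adj :=
  fun a b => decidable_of_iff' _ (SimpleGraph.fromRel_adj _ a b)

def bullB : Fin 5 → Fin 5 → Bool := fun i j =>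
  List.elem (i.val, j.val) [(0,1),(1,0),(0,2),(2,0),(1,2),(2,1),(1,3),(3,1),(2,4),(4,2)]
def dartB : Fin 5 → Fin 5 → Bool := fun i j =>
  List.elem (i.val, j.val) [(0,2),(2,0),(0,3),(3,0),(1,2),(2,1),(1,3),(3,1),(2,3),(3,2),(2,4),(4,2)]
def gemB : Fin 5 → Fin 5 → Bool := fun i j =>
  List.elem (i.val, j.val) [(0,1),(1,0),(1,2),(2,1),(2,3),(3,2),(0,4),(4,0),(1,4),(4,1),(2,4),(4,2),(3,4),(4,3)]

lemma bull_adj_iff : ∀ i j, bull.Adj i j ↔ bullB i j = true := by decide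
lemma dart_adj_iff : ∀ i j, dart.Adj i j ↔ dartB i j = true := by decide
lemma gem_adj_iff : ∀ i j, gem.Adj i j ↔ gemB i j = true := by decide

set_option synthInstance.maxSize 2000 in
set_option maxHeartbeats 8000000 in
lemma bull_classify (side inS : Fin 5 → Bool)
    (h1 : ∀ i j, side i ≠ side j → (bullB i j = (inS i && inS j)))
    (h2 : ∀ i j, i ≠ j → side i = side j → inS i → inS j → bullB i j)
    (h3 : ∀ i j k, side i = side j → side i = side k → inS i → inS j → inS k = false →
      bullB i k = bullB j k) :
    (∀ i j, side i = side j) ∨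
    (side 1 = side 0 ∧ side 2 = side 0 ∧ side 3 = side 0 ∧ side 4 ≠ side 0) ∨
    (side 1 = side 0 ∧ side 2 = side 0 ∧ side 4 = side 0 ∧ side 3 ≠ side 0) := by
  revert side inS
  decide

set_option synthInstance.maxSize 2000 in
set_option maxHeartbeats 8000000 in
lemma dart_classify (side inS : Fin 5 → Bool)
    (h1 : ∀ i j, side i ≠ side j → (dartB i j = (inS i && inS j)))
    (h2 : ∀ i j, i ≠ j → side i = side j → inS i → inS j → dartB i j)
    (h3 : ∀ i j k, side i = side j → side i = side k → inS i → inS j → inS k = false →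
      dartB i k = dartB j k) :
    (∀ i j, side i = side j) ∨
    (side 1 = side 0 ∧ side 2 = side 0 ∧ side 3 = side 0 ∧ side 4 ≠ side 0) := by
  revert side inS
  decide

set_option synthInstance.maxSize 2000 in
set_option maxHeartbeats 8000000 in
lemma gem_classify (side inS : Fin 5 → Bool)
    (h1 : ∀ i j, side i ≠ side j → (gemB i j = (inS i && inS j)))
    (h2 : ∀ i j, i ≠ j → side i = side j → inS i → inS j → gemB i j)
    (h3 : ∀ i j k, side i = side j → side i = side k → inS i → inS j → inS k = false →
      gemB i k = gemB j k) :
    (∀ i j, side i = side j) := by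
  revert side inS
  decide

lemma no_embed {V : Type*} {n : ℕ} {G : SimpleGraph V} {X : SimpleGraph (Fin n)}
    (hX : IsEmpty (X ↪g G)) (v : Fin n → V)
    (hinj : ∀ i j : Fin n, i ≠ j → v i ≠ v j)
    (hpos : ∀ i j, X.Adj i j → G.Adj (v i) (v j))
    (hneg : ∀ i j, i ≠ j → ¬X.Adj i j → ¬G.Adj (v i) (v j)) : False := by
  apply hX.false
  refine ⟨⟨v, fun i j h => ?_⟩, ?_⟩
  · by_contra hne; exact hinj i j hne h
  · intro a b
    constructor
    · intro hG
      by_contra hX'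
      have hab : a ≠ b := by rintro rfl; exact G.irrefl hG
      exact hneg a b hab hX' hG
    · exact hpos a b

section FiveVertex
variable {V : Type*} {G : SimpleGraph V}

lemma no_bull (hX : IsEmpty (bull ↪g G)) (v0 v1 v2 v3 v4 : V)
    (d01 : v0 ≠ v1) (d02 : v0 ≠ v2) (d03 : v0 ≠ v3) (d04 : v0 ≠ v4)
    (d12 : v1 ≠ v2) (d13 : v1 ≠ v3) (d14 : v1 ≠ v4)
    (d23 : v2 ≠ v3) (d24 : v2 ≠ v4) (d34 : v3 ≠ v4)
    (e01 : G.Adj v0 v1) (e02 : G.Adj v0 v2) (e12 : G.Adj v1 v2)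
    (e13 : G.Adj v1 v3) (e24 : G.Adj v2 v4)
    (n03 : ¬G.Adj v0 v3) (n04 : ¬G.Adj v0 v4) (n14 : ¬G.Adj v1 v4)
    (n23 : ¬G.Adj v2 v3) (n34 : ¬G.Adj v3 v4) : False := by
  have sy : ∀ x y : V, G.Adj x y → G.Adj y x := fun _ _ h => h.symm
  have nsy : ∀ x y : V, ¬G.Adj x y → ¬G.Adj y x := fun _ _ h h' => h h'.symm
  apply no_embed hX ![v0, v1, v2, v3, v4]
  · intro i j hne
    fin_cases i <;> fin_cases j <;>
      simp_all <;> first | assumption | (exact Ne.symm ‹_›)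
  · intro i j hadj
    fin_cases i <;> fin_cases j <;> revert hadj <;> intro hadj <;>
      first
        | exact absurd hadj (by decide)
        | simpa using e01 | simpa using sy _ _ e01
        | simpa using e02 | simpa using sy _ _ e02
        | simpa using e12 | simpa using sy _ _ e12
        | simpa using e13 | simpa using sy _ _ e13
        | simpa using e24 | simpa using sy _ _ e24
  · intro i j hne hnadj
    fin_cases i <;> fin_cases j <;>
      first
        | exact absurd rfl hne
        | exact absurd (by decide) hnadj
        | simpa using n03 | simpa using nsy _ _ n03
        | simpa using n04 | simpa using nsy _ _ n04
        | simpa using n14 | simpa using nsy _ _ n14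
        | simpa using n23 | simpa using nsy _ _ n23
        | simpa using n34 | simpa using nsy _ _ n34

lemma no_dart (hX : IsEmpty (dart ↪g G)) (v0 v1 v2 v3 v4 : V)
    (d01 : v0 ≠ v1) (d02 : v0 ≠ v2) (d03 : v0 ≠ v3) (d04 : v0 ≠ v4)
    (d12 : v1 ≠ v2) (d13 : v1 ≠ v3) (d14 : v1 ≠ v4)
    (d23 : v2 ≠ v3) (d24 : v2 ≠ v4) (d34 : v3 ≠ v4)
    (e02 : G.Adj v0 v2) (e03 : G.Adj v0 v3) (e12 : G.Adj v1 v2)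
    (e13 : G.Adj v1 v3) (e23 : G.Adj v2 v3) (e24 : G.Adj v2 v4)
    (n01 : ¬G.Adj v0 v1) (n04 : ¬G.Adj v0 v4) (n14 : ¬G.Adj v1 v4)
    (n34 : ¬G.Adj v3 v4) : False := by
  have sy : ∀ x y : V, G.Adj x y → G.Adj y x := fun _ _ h => h.symm
  have nsy : ∀ x y : V, ¬G.Adj x y → ¬G.Adj y x := fun _ _ h h' => h h'.symm
  apply no_embed hX ![v0, v1, v2, v3, v4]
  · intro i j hne
    fin_cases i <;> fin_cases j <;>
      simp_all <;> first | assumption | (exact Ne.symm ‹_›)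
  · intro i j hadj
    fin_cases i <;> fin_cases j <;> revert hadj <;> intro hadj <;>
      first
        | exact absurd hadj (by decide)
        | simpa using e02 | simpa using sy _ _ e02
        | simpa using e03 | simpa using sy _ _ e03
        | simpa using e12 | simpa using sy _ _ e12
        | simpa using e13 | simpa using sy _ _ e13
        | simpa using e23 | simpa using sy _ _ e23
        | simpa using e24 | simpa using sy _ _ e24
  · intro i j hne hnadj
    fin_cases i <;> fin_cases j <;>
      first
        | exact absurd rfl hne
        | exact absurd (by decide) hnadj
        | simpa using n01 | simpa using nsy _ _ n01
        | simpa using n04 | simpa using nsy _ _ n04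
        | simpa using n14 | simpa using nsy _ _ n14
        | simpa using n34 | simpa using nsy _ _ n34

lemma no_gem (hX : IsEmpty (gem ↪g G)) (v0 v1 v2 v3 v4 : V)
    (d01 : v0 ≠ v1) (d02 : v0 ≠ v2) (d03 : v0 ≠ v3) (d04 : v0 ≠ v4)
    (d12 : v1 ≠ v2) (d13 : v1 ≠ v3) (d14 : v1 ≠ v4)
    (d23 : v2 ≠ v3) (d24 : v2 ≠ v4) (d34 : v3 ≠ v4)
    (e01 : G.Adj v0 v1) (e12 : G.Adj v1 v2) (e23 : G.Adj v2 v3)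
    (e04 : G.Adj v0 v4) (e14 : G.Adj v1 v4) (e24 : G.Adj v2 v4) (e34 : G.Adj v3 v4)
    (n02 : ¬G.Adj v0 v2) (n03 : ¬G.Adj v0 v3) (n13 : ¬G.Adj v1 v3) : False := by
  have sy : ∀ x y : V, G.Adj x y → G.Adj y x := fun _ _ h => h.symm
  have nsy : ∀ x y : V, ¬G.Adj x y → ¬G.Adj y x := fun _ _ h h' => h h'.symm
  apply no_embed hX ![v0, v1, v2, v3, v4]
  · intro i j hne
    fin_cases i <;> fin_cases j <;>
      simp_all <;> first | assumption | (exact Ne.symm ‹_›)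
  · intro i j hadj
    fin_cases i <;> fin_cases j <;> revert hadj <;> intro hadj <;>
      first
        | exact absurd hadj (by decide)
        | simpa using e01 | simpa using sy _ _ e01
        | simpa using e12 | simpa using sy _ _ e12
        | simpa using e23 | simpa using sy _ _ e23
        | simpa using e04 | simpa using sy _ _ e04
        | simpa using e14 | simpa using sy _ _ e14
        | simpa using e24 | simpa using sy _ _ e24
        | simpa using e34 | simpa using sy _ _ e34
  · intro i j hne hnadj
    fin_cases i <;> fin_cases j <;>
      first
        | exact absurd rfl hne
        | exact absurd (by decide) hnadj
        | simpa using n02 | simpa using nsy _ _ n02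
        | simpa using n03 | simpa using nsy _ _ n03
        | simpa using n13 | simpa using nsy _ _ n13

lemma no_c4 (hX : IsEmpty (cycleGraph 4 ↪g G)) (v0 v1 v2 v3 : V)
    (d01 : v0 ≠ v1) (d02 : v0 ≠ v2) (d03 : v0 ≠ v3)
    (d12 : v1 ≠ v2) (d13 : v1 ≠ v3) (d23 : v2 ≠ v3)
    (e01 : G.Adj v0 v1) (e12 : G.Adj v1 v2) (e23 : G.Adj v2 v3) (e03 : G.Adj v0 v3)
    (n02 : ¬G.Adj v0 v2) (n13 : ¬G.Adj v1 v3) : False := by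
  have sy : ∀ x y : V, G.Adj x y → G.Adj y x := fun _ _ h => h.symm
  have nsy : ∀ x y : V, ¬G.Adj x y → ¬G.Adj y x := fun _ _ h h' => h h'.symm
  apply no_embed hX ![v0, v1, v2, v3]
  · intro i j hne
    fin_cases i <;> fin_cases j <;>
      simp_all <;> first | assumption | (exact Ne.symm ‹_›)
  · intro i j hadj
    fin_cases i <;> fin_cases j <;> revert hadj <;> intro hadj <;>
      first
        | exact absurd hadj (by decide)
        | simpa using e01 | simpa using sy _ _ e01
        | simpa using e12 | simpa using sy _ _ e12
        | simpa using e23 | simpa using sy _ _ e23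
        | simpa using e03 | simpa using sy _ _ e03
  · intro i j hne hnadj
    fin_cases i <;> fin_cases j <;>
      first
        | exact absurd rfl hne
        | exact absurd (by decide) hnadj
        | simpa using n02 | simpa using nsy _ _ n02
        | simpa using n13 | simpa using nsy _ _ n13

end FiveVertex
section Witness
variable {V : Type*} {G : SimpleGraph V} {S : Set V}

lemma clique_module_of_hyp (hc : G.IsClique S)
    (hcrit : ¬ IsCriticalClique G S → G.IsClique Set.univ) :
    ∀ x ∈ S, ∀ y ∈ S, ∀ z ∉ S, (G.Adj x z ↔ G.Adj y z) := by
  intro x hx y hy z hz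
  by_cases h : IsCriticalClique G S
  · exact h.2.1.2 x hx y hy z hz
  · have hK := hcrit h
    have hxz : x ≠ z := fun e => hz (e ▸ hx)
    have hyz : y ≠ z := fun e => hz (e ▸ hy)
    exact iff_of_true (hK (Set.mem_univ x) (Set.mem_univ z) hxz)
      (hK (Set.mem_univ y) (Set.mem_univ z) hyz)

lemma witness_of_critical (hcrit : IsCriticalClique G S) (hc : G.IsClique S)
    {s z : V} (hs : s ∈ S) (hz : z ∉ S) (hzs : G.Adj z s) :
    ∃ w, w ∉ S ∧ w ≠ z ∧ ¬(G.Adj z w ↔ G.Adj s w) := by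
  have hmod := hcrit.2.1.2
  have hzS : ∀ x ∈ S, G.Adj x z := fun x hx => (hmod x hx s hs z hz).mpr hzs.symm
  have hKne : insert z S ≠ S := fun h => hz (h ▸ Set.mem_insert z S)
  have hclique : G.IsClique (insert z S) := by
    intro x hx y hy hxy
    rcases hx with rfl | hx <;> rcases hy with rfl | hy
    · exact absurd rfl hxy
    · exact (hzS y hy).symm
    · exact hzS x hx
    · exact hc hx hy hxy
  have hnotmod : ¬ IsCliqueModule G (insert z S) :=
    fun h => hKne (hcrit.2.2 _ h (Set.subset_insert z S))
  rw [IsCliqueModule, not_and] at hnotmod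
  have hex := hnotmod hclique
  push_neg at hex
  obtain ⟨x, hx, y, hy, w, hw, hxy⟩ := hex
  have hxy' : ¬(G.Adj x w ↔ G.Adj y w) := by
    rcases hxy with ⟨u1, u2⟩ | ⟨u1, u2⟩ <;> intro h
    · exact u2 (h.mp u1)
    · exact u1 (h.mpr u2)
  clear hxy
  have hwz : w ≠ z := fun e => hw (e ▸ Set.mem_insert z S)
  have hwS : w ∉ S := fun e => hw (Set.mem_insert_of_mem _ e)
  rcases hx with rfl | hx <;> rcases hy with rfl | hy
  · exact absurd Iff.rfl hxy'
  · exact ⟨w, hwS, hwz, fun h => hxy' (h.trans (hmod s hs y hy w hwS))⟩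
  · exact ⟨w, hwS, hwz, fun h => hxy' ((hmod x hx s hs w hwS).trans h.symm)⟩
  · exact absurd (hmod x hx y hy w hwS) hxy'

lemma paw_lemma (hL : Is3LeafPower G)
    (hc : G.IsClique S) (hcrit : ¬ IsCriticalClique G S → G.IsClique Set.univ)
    {a b s c : V} (hs : s ∈ S) (ha : a ∉ S) (hb : b ∉ S) (hcS : c ∉ S)
    (hab : G.Adj a b) (has : G.Adj a s) (hbs : G.Adj b s) (hbc : G.Adj b c)
    (hac : ¬G.Adj a c) (hsc : ¬G.Adj s c) : False := by
  obtain ⟨hbull, hdart, hgem, hcyc⟩ := hL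
  have hC4 := hcyc 4 (le_refl 4)
  by_cases hcr : IsCriticalClique G S
  case neg =>
    have hK := hcrit hcr
    have hac' : a ≠ c := by rintro rfl; exact hsc has.symm
    exact hac (hK (Set.mem_univ a) (Set.mem_univ c) hac')
  case pos =>
  obtain ⟨w, hwS, hwa, hxor⟩ := witness_of_critical hcr hc hs ha has
  have dab : a ≠ b := hab.ne
  have das : a ≠ s := has.ne
  have dbs : b ≠ s := hbs.ne
  have dbc : b ≠ c := hbc.ne
  have dac : a ≠ c := by rintro rfl; exact hsc has.symm
  have dsc : s ≠ c := fun e => hcS (e ▸ hs)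
  have dws : w ≠ s := fun e => hwS (e ▸ hs)
  rcases Classical.em (G.Adj a w) with haw | haw <;>
    rcases Classical.em (G.Adj s w) with hsw | hsw
  -- Case (+,+)
  · exact hxor (iff_of_true haw hsw)
  -- Case i : G.Adj a w, ¬ G.Adj s w
  · have dwb : w ≠ b := by rintro rfl; exact hsw hbs.symm
    have dwc : w ≠ c := by rintro rfl; exact hac haw
    rcases Classical.em (G.Adj b w) with hbw | hbw <;>
      rcases Classical.em (G.Adj c w) with hcw | hcw
    · exact no_gem hgem s a w c b das.symm dws.symm dsc dbs.symm hwa.symm dac dab dwc dwb dbc.symm has.symm haw hcw.symm hbs.symm hab hbw.symm hbc.symm hsw hsc hac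
    · exact no_dart hdart s w b a c dws.symm dbs.symm das.symm dsc dwb hwa dwc dab.symm dbc dac hbs.symm has.symm hbw.symm haw.symm hab.symm hbc hsw hsc (fun h => hcw h.symm) hac
    · exact no_c4 hC4 a b c w dab dac hwa.symm dbc dwb.symm dwc.symm hab hbc hcw haw hac hbw
    · exact no_bull hbull s a b w c das.symm dbs.symm dws.symm dsc dab hwa.symm dac dwb.symm dbc dwc has.symm hbs.symm hab haw hbc hsw hsc hac hbw (fun h => hcw h.symm)
  -- Case ii : ¬ G.Adj a w, G.Adj s w
  · have dwb : w ≠ b := by rintro rfl; exact haw hab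
    have dwc : w ≠ c := by rintro rfl; exact hsc hsw
    rcases Classical.em (G.Adj b w) with hbw | hbw <;>
      rcases Classical.em (G.Adj c w) with hcw | hcw
    · exact no_gem hgem a s w c b das hwa.symm dac dab dws.symm dsc dbs.symm dwc dwb dbc.symm has hsw hcw.symm hab hbs.symm hbw.symm hbc.symm haw hac hsc
    · exact no_dart hdart a w b s c hwa.symm dab das dac dwb dws dwc dbs dbc dsc hab has hbw.symm hsw.symm hbs hbc haw hac (fun h => hcw h.symm) hsc
    · exact no_c4 hC4 b s w c dbs dwb.symm dbc dws.symm dsc dwc hbs hsw hcw.symm hbc hbw hsc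
    · exact no_bull hbull a b s c w dab das dac hwa.symm dbs dbc dwb.symm dsc dws.symm dwc.symm hab has hbs hbc hsw hac haw hbw hsc hcw
  -- Case (−,−)
  · exact hxor (iff_of_false haw hsw)

lemma diamond_lemma (hL : Is3LeafPower G)
    (hc : G.IsClique S) (hcrit : ¬ IsCriticalClique G S → G.IsClique Set.univ)
    {p q s r : V} (hs : s ∈ S) (hp : p ∉ S) (hq : q ∉ S) (hr : r ∉ S)
    (dpq : p ≠ q)
    (hps : G.Adj p s) (hqs : G.Adj q s) (hpr : G.Adj p r) (hqr : G.Adj q r)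
    (hsr : G.Adj s r) (hpq : ¬G.Adj p q) : False := by
  obtain ⟨hbull, hdart, hgem, hcyc⟩ := hL
  have hC4 := hcyc 4 (le_refl 4)
  by_cases hcr : IsCriticalClique G S
  case neg =>
    have hK := hcrit hcr
    exact hpq (hK (Set.mem_univ p) (Set.mem_univ q) dpq)
  case pos =>
  obtain ⟨w, hwS, hwr, hxor⟩ := witness_of_critical hcr hc hs hr hsr.symm
  have dps : p ≠ s := hps.ne
  have dqs : q ≠ s := hqs.ne
  have dpr : p ≠ r := hpr.ne
  have dqr : q ≠ r := hqr.ne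
  have dsr : s ≠ r := hsr.ne
  have dws : w ≠ s := fun e => hwS (e ▸ hs)
  have dwr : w ≠ r := hwr
  rcases Classical.em (G.Adj r w) with hrw | hrw <;>
    rcases Classical.em (G.Adj s w) with hsw | hsw
  · exact hxor (iff_of_true hrw hsw)
  -- Case i : G.Adj r w, ¬ G.Adj s w
  · have dwp : w ≠ p := by rintro rfl; exact hsw hps.symm
    have dwq : w ≠ q := by rintro rfl; exact hsw hqs.symm
    rcases Classical.em (G.Adj p w) with hpw | hpw <;>
      rcases Classical.em (G.Adj q w) with hqw | hqw
    · exact no_c4 hC4 p s q w dps dpq dwp.symm dqs.symm dws.symm dwq.symm hps hqs.symm hqw hpw hpq hsw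
    · exact no_gem hgem q s p w r dqs dpq.symm dwq.symm dqr dps.symm dws.symm dsr dwp.symm dpr dwr hqs hps.symm hpw hqr hsr hpr hrw.symm (fun h => hpq h.symm) hqw hsw
    · exact no_gem hgem p s q w r dps dpq dwp.symm dpr dqs.symm dws.symm dsr dwq.symm dqr dwr hps hqs.symm hqw hpr hsr hqr hrw.symm hpq hpw hsw
    · exact no_dart hdart p q r s w dpq dpr dps dwp.symm dqr dqs dwq.symm dsr.symm dwr.symm dws.symm hpr hps hqr hqs hsr.symm hrw hpq hpw hqw hsw
  -- Case ii : ¬ G.Adj r w, G.Adj s w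
  · have dwp : w ≠ p := by rintro rfl; exact hrw hpr.symm
    have dwq : w ≠ q := by rintro rfl; exact hrw hqr.symm
    rcases Classical.em (G.Adj p w) with hpw | hpw <;>
      rcases Classical.em (G.Adj q w) with hqw | hqw
    · exact no_c4 hC4 p r q w dpr dpq dwp.symm dqr.symm dwr.symm dwq.symm hpr hqr.symm hqw hpw hpq hrw
    · exact no_gem hgem q r p w s dqr dpq.symm dwq.symm dqs dpr.symm dwr.symm dsr.symm dwp.symm dps dws hqr hpr.symm hpw hqs hsr.symm hps hsw.symm (fun h => hpq h.symm) hqw hrw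
    · exact no_gem hgem p r q w s dpr dpq dwp.symm dps dqr.symm dwr.symm dsr.symm dwq.symm dqs dws hpr hqr.symm hqw hps hsr.symm hqs hsw.symm hpq hpw hrw
    · exact no_dart hdart p q s r w dpq dps dpr dwp.symm dqs dqr dwq.symm dsr dws.symm dwr.symm hps hpr hqs hqr hsr hsw hpq hpw hqw hrw
  · exact hxor (iff_of_false hrw hsw)

end Witness
section Glue
variable {V1 V2 : Type*} {G1 : SimpleGraph V1} {G2 : SimpleGraph V2} {S1 : Set V1} {S2 : Set V2}

lemma jc_ll {x y : V1} : (joinComp G1 G2 S1 S2).Adj (.inl x) (.inl y) ↔ G1.Adj x y := by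
  simp only [joinComp, fromRel_adj]
  constructor
  · rintro ⟨hne, h⟩
    rcases h with (h|h|h)|(h|h|h) <;> obtain ⟨a,b,h1,h2,h3⟩ := h <;> simp_all <;>
      exact h3.symm
  · intro h
    exact ⟨by simp [h.ne], Or.inl (Or.inl ⟨x, y, rfl, rfl, h⟩)⟩

lemma jc_rr {x y : V2} : (joinComp G1 G2 S1 S2).Adj (.inr x) (.inr y) ↔ G2.Adj x y := by
  simp only [joinComp, fromRel_adj]
  constructor
  · rintro ⟨hne, h⟩
    rcases h with (h|h|h)|(h|h|h) <;> obtain ⟨a,b,h1,h2,h3⟩ := h <;> simp_all <;>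
      exact h3.symm
  · intro h
    exact ⟨by simp [h.ne], Or.inl (Or.inr (Or.inl ⟨x, y, rfl, rfl, h⟩))⟩

lemma jc_lr {x : V1} {y : V2} :
    (joinComp G1 G2 S1 S2).Adj (.inl x) (.inr y) ↔ x ∈ S1 ∧ y ∈ S2 := by
  simp only [joinComp, fromRel_adj]
  constructor
  · rintro ⟨hne, h⟩
    rcases h with (h|h|h)|(h|h|h) <;> obtain ⟨a,b,h1,h2,h3⟩ := h <;> simp_all
  · intro h
    exact ⟨by simp, Or.inl (Or.inr (Or.inr ⟨x, y, rfl, rfl, h.1, h.2⟩))⟩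

lemma jc_rl {x : V2} {y : V1} :
    (joinComp G1 G2 S1 S2).Adj (.inr x) (.inl y) ↔ y ∈ S1 ∧ x ∈ S2 := by
  rw [SimpleGraph.adj_comm]; exact jc_lr

/-- membership predicate on the sum -/
def InS (S1 : Set V1) (S2 : Set V2) : V1 ⊕ V2 → Prop := Sum.elim (· ∈ S1) (· ∈ S2)

lemma hAdj_cross {u v : V1 ⊕ V2} (h : u.isLeft ≠ v.isLeft) :
    ((joinComp G1 G2 S1 S2).Adj u v ↔ (InS S1 S2 u ∧ InS S1 S2 v)) := by
  rcases u with x | x <;> rcases v with y | y <;> simp_all [InS, jc_lr, jc_rl]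
  exact and_comm

lemma hAdj_clique (hc1 : G1.IsClique S1) (hc2 : G2.IsClique S2) {u v : V1 ⊕ V2}
    (hne : u ≠ v) (hside : u.isLeft = v.isLeft) (hu : InS S1 S2 u) (hv : InS S1 S2 v) :
    (joinComp G1 G2 S1 S2).Adj u v := by
  rcases u with x | x <;> rcases v with y | y <;> simp_all [InS, jc_ll, jc_rr]
  · exact hc1 hu hv (by simpa using hne)
  · exact hc2 hu hv (by simpa using hne)

lemma hAdj_module
    (hmod1 : ∀ x ∈ S1, ∀ y ∈ S1, ∀ z ∉ S1, (G1.Adj x z ↔ G1.Adj y z))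
    (hmod2 : ∀ x ∈ S2, ∀ y ∈ S2, ∀ z ∉ S2, (G2.Adj x z ↔ G2.Adj y z))
    {u v w : V1 ⊕ V2}
    (h1 : u.isLeft = v.isLeft) (h2 : u.isLeft = w.isLeft)
    (hu : InS S1 S2 u) (hv : InS S1 S2 v) (hw : ¬ InS S1 S2 w) :
    ((joinComp G1 G2 S1 S2).Adj u w ↔ (joinComp G1 G2 S1 S2).Adj v w) := by
  rcases u with x | x <;> rcases v with y | y <;> rcases w with z | z <;>
    simp_all [InS, jc_ll, jc_rr]
  · exact hmod1 x hu y hv z hw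
  · exact hmod2 x hu y hv z hw

section Emb
variable {W : Type*} {X : SimpleGraph W} (e : X ↪g joinComp G1 G2 S1 S2)

lemma emb_adj_ll {i j : W} {xi xj : V1} (hi : e i = .inl xi) (hj : e j = .inl xj)
    (h : X.Adj i j) : G1.Adj xi xj := by
  have := e.map_rel_iff.mpr h
  rw [hi, hj, jc_ll] at this; exact this

lemma emb_nadj_ll {i j : W} {xi xj : V1} (hi : e i = .inl xi) (hj : e j = .inl xj)
    (h : ¬X.Adj i j) : ¬G1.Adj xi xj := by
  intro hG
  exact h (e.map_rel_iff.mp (by rw [hi, hj, jc_ll]; exact hG))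

lemma emb_adj_rr {i j : W} {xi xj : V2} (hi : e i = .inr xi) (hj : e j = .inr xj)
    (h : X.Adj i j) : G2.Adj xi xj := by
  have := e.map_rel_iff.mpr h
  rw [hi, hj, jc_rr] at this; exact this

lemma emb_nadj_rr {i j : W} {xi xj : V2} (hi : e i = .inr xi) (hj : e j = .inr xj)
    (h : ¬X.Adj i j) : ¬G2.Adj xi xj := by
  intro hG
  exact h (e.map_rel_iff.mp (by rw [hi, hj, jc_rr]; exact hG))

lemma emb_ne_ll {i j : W} {xi xj : V1} (hi : e i = .inl xi) (hj : e j = .inl xj)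
    (h : i ≠ j) : xi ≠ xj := by
  rintro rfl
  exact h (e.injective (hi.trans hj.symm))

lemma emb_ne_rr {i j : W} {xi xj : V2} (hi : e i = .inr xi) (hj : e j = .inr xj)
    (h : i ≠ j) : xi ≠ xj := by
  rintro rfl
  exact h (e.injective (hi.trans hj.symm))

lemma emb_mem_lr {i j : W} {xi : V1} {yj : V2} (hi : e i = .inl xi) (hj : e j = .inr yj)
    (h : X.Adj i j) : xi ∈ S1 ∧ yj ∈ S2 := by
  have := e.map_rel_iff.mpr h
  rw [hi, hj, jc_lr] at this; exact this

lemma emb_nmem_l {i j : W} {xi : V1} {yj : V2} (hi : e i = .inl xi) (hj : e j = .inr yj)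
    (hyj : yj ∈ S2) (h : ¬X.Adj i j) : xi ∉ S1 := by
  intro hx
  exact h (e.map_rel_iff.mp (by rw [hi, hj, jc_lr]; exact ⟨hx, hyj⟩))

lemma emb_nmem_r {i j : W} {yi : V2} {xj : V1} (hi : e i = .inr yi) (hj : e j = .inl xj)
    (hxj : xj ∈ S1) (h : ¬X.Adj i j) : yi ∉ S2 := by
  intro hy
  exact h (e.map_rel_iff.mp (by rw [hi, hj, jc_rl]; exact ⟨hxj, hy⟩))

lemma restrict_left (h : ∀ i, ∃ x, e i = Sum.inl x) : Nonempty (X ↪g G1) := by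
  choose f hf using h
  refine ⟨⟨⟨f, fun i j hij => e.injective (by rw [hf i, hf j, hij])⟩, ?_⟩⟩
  intro i j
  constructor
  · intro hG
    exact e.map_rel_iff.mp (by rw [hf i, hf j]; exact jc_ll.mpr hG)
  · intro h
    have := e.map_rel_iff.mpr h
    rw [hf i, hf j, jc_ll] at this; exact this

lemma restrict_right (h : ∀ i, ∃ x, e i = Sum.inr x) : Nonempty (X ↪g G2) := by
  choose f hf using h
  refine ⟨⟨⟨f, fun i j hij => e.injective (by rw [hf i, hf j, hij])⟩, ?_⟩⟩
  intro i j
  constructor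
  · intro hG
    exact e.map_rel_iff.mp (by rw [hf i, hf j]; exact jc_rr.mpr hG)
  · intro h
    have := e.map_rel_iff.mpr h
    rw [hf i, hf j, jc_rr] at this; exact this

end Emb
end Glue
open scoped Fin.CommRing

section CycleStuff

lemma fin_natCast_ne_zero {n k : ℕ} [NeZero n] (h1 : 0 < k) (h2 : k < n) :
    (k : Fin n) ≠ 0 := by
  intro h
  rw [Fin.natCast_eq_zero] at h
  have := Nat.le_of_dvd h1 h
  omega

lemma fin_reach {n : ℕ} (P : Fin (n+1) → Prop) (hstep : ∀ i, P i → P (i+1))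
    {i j : Fin (n+1)} (hi : P i) : P j := by
  have key : ∀ k : ℕ, P (i + (k : Fin (n+1))) := by
    intro k
    induction k with
    | zero => simpa using hi
    | succ k ih =>
      have hcast : ((k+1 : ℕ) : Fin (n+1)) = ((k : ℕ) : Fin (n+1)) + 1 := by push_cast; ring
      rw [hcast, ← add_assoc]
      exact hstep _ ih
  have hk := key (j - i).val
  rw [Fin.cast_val_eq_self] at hk
  have hij : i + (j - i) = j := by ring
  rwa [hij] at hk

lemma cycle_triangle_free {m : ℕ} {a b c : Fin (m+4)}
    (hab : (SimpleGraph.cycleGraph (m+4)).Adj a b) (hac : (SimpleGraph.cycleGraph (m+4)).Adj a c)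
    (hbc : (SimpleGraph.cycleGraph (m+4)).Adj b c) : False := by
  have h10 : (1 : Fin (m+4)) ≠ 0 := by
    have := fin_natCast_ne_zero (n := m+4) (k := 1) (by omega) (by omega)
    simpa using this
  have h30 : (3 : Fin (m+4)) ≠ 0 := by
    have := fin_natCast_ne_zero (n := m+4) (k := 3) (by omega) (by omega)
    simpa using this
  rw [SimpleGraph.cycleGraph_adj] at hab hac hbc
  rcases hab with hab | hab <;> rcases hac with hac | hac <;> rcases hbc with hbc | hbc <;>
    first
      | exact h10 (by linear_combination hab + hac + hbc)
      | exact h10 (by linear_combination hab + hac - hbc)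
      | exact h10 (by linear_combination hab - hac + hbc)
      | exact h10 (by linear_combination hab - hac - hbc)
      | exact h10 (by linear_combination - hab + hac + hbc)
      | exact h10 (by linear_combination - hab + hac - hbc)
      | exact h10 (by linear_combination - hab - hac + hbc)
      | exact h10 (by linear_combination - hab - hac - hbc)
      | exact h30 (by linear_combination hab + hac + hbc)
      | exact h30 (by linear_combination hab + hac - hbc)
      | exact h30 (by linear_combination hab - hac + hbc)
      | exact h30 (by linear_combination hab - hac - hbc)
      | exact h30 (by linear_combination - hab + hac + hbc)
      | exact h30 (by linear_combination - hab + hac - hbc)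
      | exact h30 (by linear_combination - hab - hac + hbc)
      | exact h30 (by linear_combination - hab - hac - hbc)

lemma sum_inl_of_isLeft_true {V1 V2 : Type*} {u : V1 ⊕ V2} (h : u.isLeft = true) :
    ∃ x, u = Sum.inl x := by cases u <;> simp_all

lemma sum_inr_of_isLeft_false {V1 V2 : Type*} {u : V1 ⊕ V2} (h : u.isLeft = false) :
    ∃ y, u = Sum.inr y := by cases u <;> simp_all

end CycleStuff
section SameSide
variable {V1 V2 : Type*} {G1 : SimpleGraph V1} {G2 : SimpleGraph V2} {S1 : Set V1} {S2 : Set V2}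

lemma same_side_contra {W : Type*} {X : SimpleGraph W} (e : X ↪g joinComp G1 G2 S1 S2)
    (hsame : ∀ i j : W, (e i).isLeft = (e j).isLeft) (i0 : W)
    (hX1 : IsEmpty (X ↪g G1)) (hX2 : IsEmpty (X ↪g G2)) : False := by
  cases hside : (e i0).isLeft
  · have hall : ∀ i, ∃ y, e i = Sum.inr y := fun i =>
      sum_inr_of_isLeft_false ((hsame i i0).trans hside)
    exact hX2.false (restrict_right e hall).some
  · have hall : ∀ i, ∃ x, e i = Sum.inl x := fun i =>
      sum_inl_of_isLeft_true ((hsame i i0).trans hside)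
    exact hX1.false (restrict_left e hall).some

end SameSide

theorem joinComp_threeLeafPower_of_cliques {V1 V2 : Type*}
    (G1 : SimpleGraph V1) (G2 : SimpleGraph V2)
    (h1 : G1.Connected) (h2 : G2.Connected)
    (hL1 : Is3LeafPower G1) (hL2 : Is3LeafPower G2)
    (S1 : Set V1) (S2 : Set V2) (hS1 : S1.Nonempty) (hS2 : S2.Nonempty)
    (hc1 : G1.IsClique S1) (hc2 : G2.IsClique S2)
    (hcrit1 : ¬ IsCriticalClique G1 S1 → G1.IsClique Set.univ)
    (hcrit2 : ¬ IsCriticalClique G2 S2 → G2.IsClique Set.univ) :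
    Is3LeafPower (joinComp G1 G2 S1 S2) := by
  classical
  have hmod1 := clique_module_of_hyp hc1 hcrit1
  have hmod2 := clique_module_of_hyp hc2 hcrit2
  refine ⟨⟨fun e => ?_⟩, ⟨fun e => ?_⟩, ⟨fun e => ?_⟩, fun n hn => ⟨fun e => ?_⟩⟩
  -- ### bull
  · have cls := bull_classify (fun i => ((e i).isLeft)) (fun i => decide (InS S1 S2 (e i)))
      (by
        intro i j hs
        rw [Bool.eq_iff_iff, ← bull_adj_iff, Bool.and_eq_true, decide_eq_true_eq,
          decide_eq_true_eq]
        exact e.map_rel_iff.symm.trans (hAdj_cross hs))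
      (by
        intro i j hne hsd hi hj
        rw [← bull_adj_iff]
        exact e.map_rel_iff.mp (hAdj_clique hc1 hc2 (fun h => hne (e.injective h))
          hsd (of_decide_eq_true hi) (of_decide_eq_true hj)))
      (by
        intro i j k hs1 hs2 hi hj hk
        rw [Bool.eq_iff_iff, ← bull_adj_iff, ← bull_adj_iff]
        exact e.map_rel_iff.symm.trans ((hAdj_module hmod1 hmod2 hs1 hs2
          (of_decide_eq_true hi) (of_decide_eq_true hj)
          (of_decide_eq_false hk)).trans e.map_rel_iff))
    rcases cls with hsame | hconf | hconf
    · exact same_side_contra e hsame 0 hL1.1 hL2.1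
    · -- pendant at 4
      cases hside : (e 0).isLeft
      case false =>
        obtain ⟨y0, hx0⟩ := sum_inr_of_isLeft_false hside
        obtain ⟨y1, hx1⟩ := sum_inr_of_isLeft_false (hconf.1.trans hside)
        obtain ⟨y2, hx2⟩ := sum_inr_of_isLeft_false (hconf.2.1.trans hside)
        obtain ⟨y3, hx3⟩ := sum_inr_of_isLeft_false (hconf.2.2.1.trans hside)
        have hs4 : (e 4).isLeft = true := by
          cases h4 : (e 4).isLeft
          · exact absurd (h4.trans hside.symm) hconf.2.2.2
          · rfl
        obtain ⟨x4, hx4⟩ := sum_inl_of_isLeft_true hs4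
        have m := emb_mem_lr e hx4 hx2 (by decide : bull.Adj 4 2)
        have h0S : y0 ∉ S2 := emb_nmem_r e hx0 hx4 m.1 (by decide : ¬bull.Adj 0 4)
        have h1S : y1 ∉ S2 := emb_nmem_r e hx1 hx4 m.1 (by decide : ¬bull.Adj 1 4)
        have h3S : y3 ∉ S2 := emb_nmem_r e hx3 hx4 m.1 (by decide : ¬bull.Adj 3 4)
        exact paw_lemma hL2 hc2 hcrit2 m.2 h0S h1S h3S
          (emb_adj_rr e hx0 hx1 (by decide)) (emb_adj_rr e hx0 hx2 (by decide))
          (emb_adj_rr e hx1 hx2 (by decide)) (emb_adj_rr e hx1 hx3 (by decide))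
          (emb_nadj_rr e hx0 hx3 (by decide)) (emb_nadj_rr e hx2 hx3 (by decide))
      case true =>
        obtain ⟨x0, hx0⟩ := sum_inl_of_isLeft_true hside
        obtain ⟨x1, hx1⟩ := sum_inl_of_isLeft_true (hconf.1.trans hside)
        obtain ⟨x2, hx2⟩ := sum_inl_of_isLeft_true (hconf.2.1.trans hside)
        obtain ⟨x3, hx3⟩ := sum_inl_of_isLeft_true (hconf.2.2.1.trans hside)
        have hs4 : (e 4).isLeft = false := by
          cases h4 : (e 4).isLeft
          · rfl
          · exact absurd (h4.trans hside.symm) hconf.2.2.2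
        obtain ⟨y4, hx4⟩ := sum_inr_of_isLeft_false hs4
        have m := emb_mem_lr e hx2 hx4 (by decide : bull.Adj 2 4)
        have h0S : x0 ∉ S1 := emb_nmem_l e hx0 hx4 m.2 (by decide : ¬bull.Adj 0 4)
        have h1S : x1 ∉ S1 := emb_nmem_l e hx1 hx4 m.2 (by decide : ¬bull.Adj 1 4)
        have h3S : x3 ∉ S1 := emb_nmem_l e hx3 hx4 m.2 (by decide : ¬bull.Adj 3 4)
        exact paw_lemma hL1 hc1 hcrit1 m.1 h0S h1S h3S
          (emb_adj_ll e hx0 hx1 (by decide)) (emb_adj_ll e hx0 hx2 (by decide))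
          (emb_adj_ll e hx1 hx2 (by decide)) (emb_adj_ll e hx1 hx3 (by decide))
          (emb_nadj_ll e hx0 hx3 (by decide)) (emb_nadj_ll e hx2 hx3 (by decide))
    · -- pendant at 3
      cases hside : (e 0).isLeft
      case false =>
        obtain ⟨y0, hx0⟩ := sum_inr_of_isLeft_false hside
        obtain ⟨y1, hx1⟩ := sum_inr_of_isLeft_false (hconf.1.trans hside)
        obtain ⟨y2, hx2⟩ := sum_inr_of_isLeft_false (hconf.2.1.trans hside)
        obtain ⟨y4, hx4⟩ := sum_inr_of_isLeft_false (hconf.2.2.1.trans hside)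
        have hs3 : (e 3).isLeft = true := by
          cases h3 : (e 3).isLeft
          · exact absurd (h3.trans hside.symm) hconf.2.2.2
          · rfl
        obtain ⟨x3, hx3⟩ := sum_inl_of_isLeft_true hs3
        have m := emb_mem_lr e hx3 hx1 (by decide : bull.Adj 3 1)
        have h0S : y0 ∉ S2 := emb_nmem_r e hx0 hx3 m.1 (by decide : ¬bull.Adj 0 3)
        have h2S : y2 ∉ S2 := emb_nmem_r e hx2 hx3 m.1 (by decide : ¬bull.Adj 2 3)
        have h4S : y4 ∉ S2 := emb_nmem_r e hx4 hx3 m.1 (by decide : ¬bull.Adj 4 3)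
        exact paw_lemma hL2 hc2 hcrit2 m.2 h0S h2S h4S
          (emb_adj_rr e hx0 hx2 (by decide)) (emb_adj_rr e hx0 hx1 (by decide))
          (emb_adj_rr e hx2 hx1 (by decide)) (emb_adj_rr e hx2 hx4 (by decide))
          (emb_nadj_rr e hx0 hx4 (by decide)) (emb_nadj_rr e hx1 hx4 (by decide))
      case true =>
        obtain ⟨x0, hx0⟩ := sum_inl_of_isLeft_true hside
        obtain ⟨x1, hx1⟩ := sum_inl_of_isLeft_true (hconf.1.trans hside)
        obtain ⟨x2, hx2⟩ := sum_inl_of_isLeft_true (hconf.2.1.trans hside)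
        obtain ⟨x4, hx4⟩ := sum_inl_of_isLeft_true (hconf.2.2.1.trans hside)
        have hs3 : (e 3).isLeft = false := by
          cases h3 : (e 3).isLeft
          · rfl
          · exact absurd (h3.trans hside.symm) hconf.2.2.2
        obtain ⟨y3, hx3⟩ := sum_inr_of_isLeft_false hs3
        have m := emb_mem_lr e hx1 hx3 (by decide : bull.Adj 1 3)
        have h0S : x0 ∉ S1 := emb_nmem_l e hx0 hx3 m.2 (by decide : ¬bull.Adj 0 3)
        have h2S : x2 ∉ S1 := emb_nmem_l e hx2 hx3 m.2 (by decide : ¬bull.Adj 2 3)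
        have h4S : x4 ∉ S1 := emb_nmem_l e hx4 hx3 m.2 (by decide : ¬bull.Adj 4 3)
        exact paw_lemma hL1 hc1 hcrit1 m.1 h0S h2S h4S
          (emb_adj_ll e hx0 hx2 (by decide)) (emb_adj_ll e hx0 hx1 (by decide))
          (emb_adj_ll e hx2 hx1 (by decide)) (emb_adj_ll e hx2 hx4 (by decide))
          (emb_nadj_ll e hx0 hx4 (by decide)) (emb_nadj_ll e hx1 hx4 (by decide))
  -- ### dart
  · have cls := dart_classify (fun i => ((e i).isLeft)) (fun i => decide (InS S1 S2 (e i)))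
      (by
        intro i j hs
        rw [Bool.eq_iff_iff, ← dart_adj_iff, Bool.and_eq_true, decide_eq_true_eq,
          decide_eq_true_eq]
        exact e.map_rel_iff.symm.trans (hAdj_cross hs))
      (by
        intro i j hne hsd hi hj
        rw [← dart_adj_iff]
        exact e.map_rel_iff.mp (hAdj_clique hc1 hc2 (fun h => hne (e.injective h))
          hsd (of_decide_eq_true hi) (of_decide_eq_true hj)))
      (by
        intro i j k hs1 hs2 hi hj hk
        rw [Bool.eq_iff_iff, ← dart_adj_iff, ← dart_adj_iff]
        exact e.map_rel_iff.symm.trans ((hAdj_module hmod1 hmod2 hs1 hs2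
          (of_decide_eq_true hi) (of_decide_eq_true hj)
          (of_decide_eq_false hk)).trans e.map_rel_iff))
    rcases cls with hsame | hconf
    · exact same_side_contra e hsame 0 hL1.2.1 hL2.2.1
    · cases hside : (e 0).isLeft
      case false =>
        obtain ⟨y0, hx0⟩ := sum_inr_of_isLeft_false hside
        obtain ⟨y1, hx1⟩ := sum_inr_of_isLeft_false (hconf.1.trans hside)
        obtain ⟨y2, hx2⟩ := sum_inr_of_isLeft_false (hconf.2.1.trans hside)
        obtain ⟨y3, hx3⟩ := sum_inr_of_isLeft_false (hconf.2.2.1.trans hside)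
        have hs4 : (e 4).isLeft = true := by
          cases h4 : (e 4).isLeft
          · exact absurd (h4.trans hside.symm) hconf.2.2.2
          · rfl
        obtain ⟨x4, hx4⟩ := sum_inl_of_isLeft_true hs4
        have m := emb_mem_lr e hx4 hx2 (by decide : dart.Adj 4 2)
        have h0S : y0 ∉ S2 := emb_nmem_r e hx0 hx4 m.1 (by decide : ¬dart.Adj 0 4)
        have h1S : y1 ∉ S2 := emb_nmem_r e hx1 hx4 m.1 (by decide : ¬dart.Adj 1 4)
        have h3S : y3 ∉ S2 := emb_nmem_r e hx3 hx4 m.1 (by decide : ¬dart.Adj 3 4)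
        exact diamond_lemma hL2 hc2 hcrit2 m.2 h0S h1S h3S
          (emb_ne_rr e hx0 hx1 (by decide))
          (emb_adj_rr e hx0 hx2 (by decide)) (emb_adj_rr e hx1 hx2 (by decide))
          (emb_adj_rr e hx0 hx3 (by decide)) (emb_adj_rr e hx1 hx3 (by decide))
          (emb_adj_rr e hx2 hx3 (by decide)) (emb_nadj_rr e hx0 hx1 (by decide))
      case true =>
        obtain ⟨x0, hx0⟩ := sum_inl_of_isLeft_true hside
        obtain ⟨x1, hx1⟩ := sum_inl_of_isLeft_true (hconf.1.trans hside)
        obtain ⟨x2, hx2⟩ := sum_inl_of_isLeft_true (hconf.2.1.trans hside)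
        obtain ⟨x3, hx3⟩ := sum_inl_of_isLeft_true (hconf.2.2.1.trans hside)
        have hs4 : (e 4).isLeft = false := by
          cases h4 : (e 4).isLeft
          · rfl
          · exact absurd (h4.trans hside.symm) hconf.2.2.2
        obtain ⟨y4, hx4⟩ := sum_inr_of_isLeft_false hs4
        have m := emb_mem_lr e hx2 hx4 (by decide : dart.Adj 2 4)
        have h0S : x0 ∉ S1 := emb_nmem_l e hx0 hx4 m.2 (by decide : ¬dart.Adj 0 4)
        have h1S : x1 ∉ S1 := emb_nmem_l e hx1 hx4 m.2 (by decide : ¬dart.Adj 1 4)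
        have h3S : x3 ∉ S1 := emb_nmem_l e hx3 hx4 m.2 (by decide : ¬dart.Adj 3 4)
        exact diamond_lemma hL1 hc1 hcrit1 m.1 h0S h1S h3S
          (emb_ne_ll e hx0 hx1 (by decide))
          (emb_adj_ll e hx0 hx2 (by decide)) (emb_adj_ll e hx1 hx2 (by decide))
          (emb_adj_ll e hx0 hx3 (by decide)) (emb_adj_ll e hx1 hx3 (by decide))
          (emb_adj_ll e hx2 hx3 (by decide)) (emb_nadj_ll e hx0 hx1 (by decide))
  -- ### gem
  · have cls := gem_classify (fun i => ((e i).isLeft)) (fun i => decide (InS S1 S2 (e i)))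
      (by
        intro i j hs
        rw [Bool.eq_iff_iff, ← gem_adj_iff, Bool.and_eq_true, decide_eq_true_eq,
          decide_eq_true_eq]
        exact e.map_rel_iff.symm.trans (hAdj_cross hs))
      (by
        intro i j hne hsd hi hj
        rw [← gem_adj_iff]
        exact e.map_rel_iff.mp (hAdj_clique hc1 hc2 (fun h => hne (e.injective h))
          hsd (of_decide_eq_true hi) (of_decide_eq_true hj)))
      (by
        intro i j k hs1 hs2 hi hj hk
        rw [Bool.eq_iff_iff, ← gem_adj_iff, ← gem_adj_iff]
        exact e.map_rel_iff.symm.trans ((hAdj_module hmod1 hmod2 hs1 hs2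
          (of_decide_eq_true hi) (of_decide_eq_true hj)
          (of_decide_eq_false hk)).trans e.map_rel_iff))
    exact same_side_contra e cls 0 hL1.2.2.1 hL2.2.2.1
  -- ### cycles
  · obtain ⟨m, rfl⟩ : ∃ m, n = m + 4 := ⟨n - 4, by omega⟩
    by_cases hall : ∀ i, ∃ x, e i = Sum.inl x
    · exact (hL1.2.2.2 (m+4) (by omega)).false (restrict_left e hall).some
    by_cases hallr : ∀ i, ∃ y, e i = Sum.inr y
    · exact (hL2.2.2.2 (m+4) (by omega)).false (restrict_right e hallr).some
    push_neg at hall hallr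
    obtain ⟨j0, hj0⟩ := hall
    obtain ⟨i0, hi0⟩ := hallr
    have Pi0 : (e i0).isLeft = true := by
      rcases h : e i0 with x | y
      · rfl
      · exact absurd h (hi0 y)
    have Pj0 : (e j0).isLeft = false := by
      rcases h : e j0 with x | y
      · exact absurd h (hj0 x)
      · rfl
    have c1 : ∃ i, (e i).isLeft = true ∧ (e (i+1)).isLeft = false := by
      by_contra hcon
      push_neg at hcon
      have step : ∀ i : Fin (m+4), (e i).isLeft = true → (e (i+1)).isLeft = true := by
        intro i h
        have hc := hcon i h
        cases hb : (e (i+1)).isLeft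
        · exact absurd hb hc
        · rfl
      have := fin_reach (n := m+3) (fun i => (e i).isLeft = true) step (j := j0) Pi0
      rw [this] at Pj0
      cases Pj0
    have c2 : ∃ j, (e j).isLeft = false ∧ (e (j+1)).isLeft = true := by
      by_contra hcon
      push_neg at hcon
      have step : ∀ i : Fin (m+4), (e i).isLeft = false → (e (i+1)).isLeft = false := by
        intro i h
        have hc := hcon i h
        cases hb : (e (i+1)).isLeft
        · rfl
        · exact absurd hb hc
      have := fin_reach (n := m+3) (fun i => (e i).isLeft = false) step (j := i0) Pj0
      rw [this] at Pi0
      cases Pi0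
    obtain ⟨i, hi, hi1⟩ := c1
    obtain ⟨j, hj, hj1⟩ := c2
    obtain ⟨x, hx⟩ := sum_inl_of_isLeft_true hi
    obtain ⟨y, hy⟩ := sum_inr_of_isLeft_false hi1
    obtain ⟨y', hy'⟩ := sum_inr_of_isLeft_false hj
    obtain ⟨x', hx'⟩ := sum_inl_of_isLeft_true hj1
    have adjii1 : (cycleGraph (m+4)).Adj i (i+1) := by
      rw [cycleGraph_adj]
      exact Or.inr (by ring)
    have adjjj1 : (cycleGraph (m+4)).Adj j (j+1) := by
      rw [cycleGraph_adj]
      exact Or.inr (by ring)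
    have mem1 : x ∈ S1 ∧ y ∈ S2 := emb_mem_lr e hx hy adjii1
    have mem2 : x' ∈ S1 ∧ y' ∈ S2 := emb_mem_lr e hx' hy' adjjj1.symm
    have hji : j = i + 1 := by
      by_contra hne
      have hyy : y ≠ y' := by
        intro h
        exact hne (e.injective (by rw [hy, hy', h])).symm
      have aij : (cycleGraph (m+4)).Adj i j :=
        e.map_rel_iff.mp (by rw [hx, hy', jc_lr]; exact ⟨mem1.1, mem2.2⟩)
      have ai1j : (cycleGraph (m+4)).Adj (i+1) j :=
        e.map_rel_iff.mp (by rw [hy, hy', jc_rr]; exact hc2 mem1.2 mem2.2 hyy)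
      exact cycle_triangle_free adjii1 aij ai1j
    have hj1i : j + 1 = i := by
      by_contra hne
      have hxx : x' ≠ x := by
        intro h
        exact hne (e.injective (by rw [hx', hx, h]))
      have aji : (cycleGraph (m+4)).Adj j i :=
        e.map_rel_iff.mp (by rw [hy', hx, jc_rl]; exact ⟨mem1.1, mem2.2⟩)
      have aj1i : (cycleGraph (m+4)).Adj (j+1) i :=
        e.map_rel_iff.mp (by rw [hx', hx, jc_ll]; exact hc1 mem2.1 mem1.1 hxx)
      exact cycle_triangle_free adjjj1 aji aj1i
    have h20 : (2 : Fin (m+4)) ≠ 0 := by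
      have := fin_natCast_ne_zero (n := m+4) (k := 2) (by omega) (by omega)
      simpa using this
    exact h20 (by linear_combination hj1i - hji)
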